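/- Let G be the group of block matrices [[I_{2g}, A],[0, π]] over ℤ/2 acting on (ℤ/2)^{2g} ⊕ Q, where A ranges over all (2g)×dim(Q) matrices and π ranges over the image of the S_{4g−4} coordinate-permutation action on Q = (ℤ/2)^{4g−4}_{even}/⟨(1,…,1)⟩. Then the number of G-orbits on (ℤ/2)^{2g} ⊕ Q is 2^{2g} + g − 1. -/

import Mathlib

open Finset

namespace Stmt12Aux

variable {n : ℕ}

def wt (x : Fin n → ZMod 2) : ℕ := (univ.filter (fun i => x i = 1)).card

lemma zmod2_cases (a : ZMod 2) : a = 0 ∨ a = 1 := by revert a; decide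

lemma zmod2_ne_one {a : ZMod 2} (h : a ≠ 1) : a = 0 := by revert h; revert a; decide

lemma wt_eq_card_subtype (x : Fin n → ZMod 2) : wt x = Fintype.card {i // x i = 1} :=
  (Fintype.card_subtype _).symm

lemma wt_le (x : Fin n → ZMod 2) : wt x ≤ n := by
  simpa [wt] using (Finset.card_filter_le univ (fun i => x i = 1))

lemma sum_eq_wt (x : Fin n → ZMod 2) : ∑ i, x i = (wt x : ZMod 2) := by
  rw [← Finset.sum_filter_add_sum_filter_not univ (fun i => x i = 1)]
  have h1 : ∑ i ∈ univ.filter (fun i => x i = 1), x i = (wt x : ZMod 2) := by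
    rw [Finset.sum_congr rfl (fun i hi => (Finset.mem_filter.mp hi).2)]
    simp [wt]
  have h2 : ∑ i ∈ univ.filter (fun i => ¬ x i = 1), x i = 0 := by
    apply Finset.sum_eq_zero
    intro i hi
    exact zmod2_ne_one (Finset.mem_filter.mp hi).2
  rw [h1, h2, add_zero]

lemma wt_comp_perm (x : Fin n → ZMod 2) (π : Equiv.Perm (Fin n)) : wt (x ∘ π) = wt x := by
  rw [wt_eq_card_subtype, wt_eq_card_subtype]
  exact Fintype.card_congr (Equiv.subtypeEquiv π (fun i => Iff.rfl))

lemma wt_add_one (x : Fin n → ZMod 2) : wt (fun i => x i + 1) = n - wt x := by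
  have key : (univ.filter (fun i => x i + 1 = (1:ZMod 2))) =
      (univ.filter (fun i => ¬ x i = 1)) := by
    apply Finset.filter_congr
    intro i _
    constructor
    · intro h hx; rw [hx] at h; simp at h
    · intro h
      rw [zmod2_ne_one h, zero_add]
  rw [wt, key, Finset.filter_not, Finset.card_sdiff_of_subset (Finset.filter_subset _ _)]
  simp [wt]

lemma wt_eq_zero (x : Fin n → ZMod 2) (h : wt x = 0) : x = fun _ => 0 := by
  funext i
  apply zmod2_ne_one
  intro hx
  have : i ∈ univ.filter (fun i => x i = 1) := by simp [hx]
  rw [Finset.card_eq_zero.mp h] at this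
  exact absurd this (Finset.notMem_empty i)

lemma wt_eq_n (x : Fin n → ZMod 2) (h : wt x = n) : x = fun _ => 1 := by
  have huniv : univ.filter (fun i => x i = 1) = univ := by
    apply Finset.eq_univ_of_card
    simpa [wt] using h
  funext i
  have : i ∈ univ.filter (fun i => x i = 1) := by rw [huniv]; exact Finset.mem_univ i
  exact (Finset.mem_filter.mp this).2

lemma exists_perm (x y : Fin n → ZMod 2) (h : wt x = wt y) :
    ∃ π : Equiv.Perm (Fin n), y = x ∘ π := by
  have hc1 : Fintype.card {i // y i = 1} = Fintype.card {i // x i = 1} := by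
    rw [← wt_eq_card_subtype, ← wt_eq_card_subtype, h]
  have hc2 : Fintype.card {i // ¬ y i = 1} = Fintype.card {i // ¬ x i = 1} := by
    rw [Fintype.card_subtype_compl, Fintype.card_subtype_compl, hc1]
  let e₁ : {i // y i = 1} ≃ {i // x i = 1} := Fintype.equivOfCardEq hc1
  let e₂ : {i // ¬ y i = 1} ≃ {i // ¬ x i = 1} := Fintype.equivOfCardEq hc2
  refine ⟨(Equiv.sumCompl (fun i => y i = 1)).symm.trans
    ((e₁.sumCongr e₂).trans (Equiv.sumCompl (fun i => x i = 1))), ?_⟩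
  funext i
  by_cases hy : y i = 1
  · rw [hy]
    have hstep : (Equiv.sumCompl (fun i => y i = 1)).symm i = Sum.inl ⟨i, hy⟩ :=
      Equiv.sumCompl_symm_apply_of_pos (p := fun i => y i = 1) hy
    simp only [Function.comp_apply, Equiv.trans_apply, hstep, Equiv.sumCongr_apply,
      Sum.map_inl, Equiv.sumCompl_apply_inl]
    exact ((e₁ ⟨i, hy⟩).2).symm
  · rw [zmod2_ne_one hy]
    have hstep : (Equiv.sumCompl (fun i => y i = 1)).symm i = Sum.inr ⟨i, hy⟩ :=
      Equiv.sumCompl_symm_apply_of_neg (p := fun i => y i = 1) hy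
    simp only [Function.comp_apply, Equiv.trans_apply, hstep, Equiv.sumCongr_apply,
      Sum.map_inr, Equiv.sumCompl_apply_inr]
    exact (zmod2_ne_one ((e₂ ⟨i, hy⟩).2)).symm

lemma nonconst_exists (x : Fin n → ZMod 2) (h : ¬ ∃ c : ZMod 2, x = fun _ => c) :
    ∃ i j, x i = 1 ∧ x j = 0 := by
  by_cases h1 : ∃ i, x i = 1
  · obtain ⟨i, hi⟩ := h1
    by_cases h0 : ∃ j, x j = 0
    · obtain ⟨j, hj⟩ := h0
      exact ⟨i, j, hi, hj⟩
    · exfalso; apply h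
      refine ⟨1, funext fun j => ?_⟩
      rcases zmod2_cases (x j) with hc | hc
      · exact absurd ⟨j, hc⟩ h0
      · exact hc
  · exfalso; apply h
    refine ⟨0, funext fun i => ?_⟩
    rcases zmod2_cases (x i) with hc | hc
    · exact hc
    · exact absurd ⟨i, hc⟩ h1



lemma card_filter_lt (n m : ℕ) (h : m ≤ n) :
    (univ.filter fun i : Fin n => (i : ℕ) < m).card = m := by
  classical
  rw [← Fintype.card_subtype]
  have e : Fin m ≃ {i : Fin n // (i : ℕ) < m} :=
    { toFun := fun k => ⟨⟨k.1, lt_of_lt_of_le k.2 h⟩, k.2⟩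
      invFun := fun i => ⟨i.1.1, i.2⟩
      left_inv := fun k => rfl
      right_inv := fun i => rfl }
  rw [← Fintype.card_congr e, Fintype.card_fin]

noncomputable def f0 (g : ℕ) (hg : 3 ≤ g)
    (p : (Fin (2 * g) → ZMod 2) × {x : Fin (4 * g - 4) → ZMod 2 // ∑ i, x i = 0}) :
    (Fin (2 * g) → ZMod 2) ⊕ Fin (g - 1) := by
  classical
  exact if h : ∃ c : ZMod 2, (p.2 : Fin (4 * g - 4) → ZMod 2) = fun _ => c then Sum.inl p.1
  else Sum.inr ⟨min (wt (p.2 : Fin (4 * g - 4) → ZMod 2))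
      (4 * g - 4 - wt (p.2 : Fin (4 * g - 4) → ZMod 2)) / 2 - 1, by
    have hw := wt_le (p.2 : Fin (4 * g - 4) → ZMod 2)
    omega⟩


lemma f0_resp (g : ℕ) (hg : 3 ≤ g)
    (p q : (Fin (2 * g) → ZMod 2) × {x : Fin (4 * g - 4) → ZMod 2 // ∑ i, x i = 0})
    (h : ∃ π : Equiv.Perm (Fin (4 * g - 4)), ∃ c : ZMod 2,
        ∃ A : (Fin (4 * g - 4) → ZMod 2) →ₗ[ZMod 2] (Fin (2 * g) → ZMod 2),
          A (fun _ => 1) = 0 ∧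
          (q.2 : Fin (4 * g - 4) → ZMod 2) =
            ((p.2 : Fin (4 * g - 4) → ZMod 2) ∘ π + fun _ => c) ∧
          q.1 = p.1 + A (p.2 : Fin (4 * g - 4) → ZMod 2)) :
    f0 g hg p = f0 g hg q := by
  classical
  obtain ⟨π, c, A, hA1, h2, h1⟩ := h
  by_cases hp : ∃ c0 : ZMod 2, (p.2 : Fin (4 * g - 4) → ZMod 2) = fun _ => c0
  · obtain ⟨c0, hc0⟩ := hp
    have hq : (q.2 : Fin (4 * g - 4) → ZMod 2) = fun _ => c0 + c := by
      rw [h2, hc0]; funext i; simp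
    have hAp : A (p.2 : Fin (4 * g - 4) → ZMod 2) = 0 := by
      rw [hc0]
      have hsm : (fun _ : Fin (4 * g - 4) => c0) = c0 • (fun _ => (1 : ZMod 2)) := by
        funext i; simp
      rw [hsm, map_smul, hA1, smul_zero]
    rw [f0, f0, dif_pos ⟨c0, hc0⟩, dif_pos ⟨c0 + c, hq⟩, h1, hAp, add_zero]
  · have hq : ¬ ∃ c0 : ZMod 2, (q.2 : Fin (4 * g - 4) → ZMod 2) = fun _ => c0 := by
      rintro ⟨d, hd⟩
      apply hp
      refine ⟨d - c, funext fun i => ?_⟩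
      have h3 := congrFun h2 (π.symm i)
      rw [congrFun hd (π.symm i)] at h3
      simp only [Pi.add_apply, Function.comp_apply, Equiv.apply_symm_apply] at h3
      rw [eq_sub_iff_add_eq, h3]
    have hwt : wt (q.2 : Fin (4 * g - 4) → ZMod 2) = wt (p.2 : Fin (4 * g - 4) → ZMod 2) ∨
        wt (q.2 : Fin (4 * g - 4) → ZMod 2) =
          (4 * g - 4) - wt (p.2 : Fin (4 * g - 4) → ZMod 2) := by
      rcases zmod2_cases c with hc | hc
      · left
        have hcomp : (q.2 : Fin (4 * g - 4) → ZMod 2) =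
            (p.2 : Fin (4 * g - 4) → ZMod 2) ∘ π := by
          rw [h2, hc]; funext i; simp
        rw [hcomp, wt_comp_perm]
      · right
        have hcomp : (q.2 : Fin (4 * g - 4) → ZMod 2) =
            fun i => ((p.2 : Fin (4 * g - 4) → ZMod 2) ∘ π) i + 1 := by
          rw [h2, hc]; funext i; simp
        rw [hcomp, wt_add_one, wt_comp_perm]
    rw [f0, f0, dif_neg hp, dif_neg hq]
    congr 1
    apply Fin.ext
    have hw := wt_le (p.2 : Fin (4 * g - 4) → ZMod 2)
    have hw' := wt_le (q.2 : Fin (4 * g - 4) → ZMod 2)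
    simp only
    rcases hwt with h' | h' <;> omega

lemma f0_inj (g : ℕ) (hg : 3 ≤ g)
    (p q : (Fin (2 * g) → ZMod 2) × {x : Fin (4 * g - 4) → ZMod 2 // ∑ i, x i = 0})
    (h : f0 g hg p = f0 g hg q) :
    ∃ π : Equiv.Perm (Fin (4 * g - 4)), ∃ c : ZMod 2,
        ∃ A : (Fin (4 * g - 4) → ZMod 2) →ₗ[ZMod 2] (Fin (2 * g) → ZMod 2),
          A (fun _ => 1) = 0 ∧
          (q.2 : Fin (4 * g - 4) → ZMod 2) =
            ((p.2 : Fin (4 * g - 4) → ZMod 2) ∘ π + fun _ => c) ∧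
          q.1 = p.1 + A (p.2 : Fin (4 * g - 4) → ZMod 2) := by
  classical
  by_cases hp : ∃ c0 : ZMod 2, (p.2 : Fin (4 * g - 4) → ZMod 2) = fun _ => c0
  · by_cases hq : ∃ c0 : ZMod 2, (q.2 : Fin (4 * g - 4) → ZMod 2) = fun _ => c0
    · obtain ⟨c0, hc0⟩ := hp
      obtain ⟨d, hd⟩ := hq
      rw [f0, f0, dif_pos ⟨c0, hc0⟩, dif_pos ⟨d, hd⟩] at h
      refine ⟨1, d - c0, 0, by simp, ?_, ?_⟩
      · rw [hd, hc0]; funext i; simp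
      · simpa using (Sum.inl.inj h).symm
    · exfalso
      rw [f0, f0, dif_pos hp, dif_neg hq] at h
      exact Sum.inl_ne_inr h
  · by_cases hq : ∃ c0 : ZMod 2, (q.2 : Fin (4 * g - 4) → ZMod 2) = fun _ => c0
    · exfalso
      rw [f0, f0, dif_neg hp, dif_pos hq] at h
      exact Sum.inr_ne_inl h
    · rw [f0, f0, dif_neg hp, dif_neg hq] at h
      have hk := Fin.val_eq_of_eq (Sum.inr.inj h)
      simp only at hk
      set wp := wt (p.2 : Fin (4 * g - 4) → ZMod 2) with hwp
      set wq := wt (q.2 : Fin (4 * g - 4) → ZMod 2) with hwq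
      -- evenness
      have hep : 2 ∣ wp := by
        rw [← ZMod.natCast_eq_zero_iff, ← sum_eq_wt]
        exact p.2.2
      have heq : 2 ∣ wq := by
        rw [← ZMod.natCast_eq_zero_iff, ← sum_eq_wt]
        exact q.2.2
      have hwple := wt_le (p.2 : Fin (4 * g - 4) → ZMod 2)
      have hwqle := wt_le (q.2 : Fin (4 * g - 4) → ZMod 2)
      have hp0 : wp ≠ 0 := fun h0 => hp ⟨0, wt_eq_zero _ h0⟩
      have hpn : wp ≠ 4 * g - 4 := fun h0 => hp ⟨1, wt_eq_n _ h0⟩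
      have hq0 : wq ≠ 0 := fun h0 => hq ⟨0, wt_eq_zero _ h0⟩
      have hqn : wq ≠ 4 * g - 4 := fun h0 => hq ⟨1, wt_eq_n _ h0⟩
      have hcases : wq = wp ∨ wq = 4 * g - 4 - wp := by omega
      -- the linear map A
      obtain ⟨i, j, hi, hj⟩ := nonconst_exists _ hp
      set A : (Fin (4 * g - 4) → ZMod 2) →ₗ[ZMod 2] (Fin (2 * g) → ZMod 2) :=
        ((LinearMap.proj i : (Fin (4 * g - 4) → ZMod 2) →ₗ[ZMod 2] ZMod 2) -
          LinearMap.proj j).smulRight (q.1 - p.1) with hA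
      have hA1 : A (fun _ => 1) = 0 := by
        rw [hA]
        simp [LinearMap.smulRight_apply]
      have hAp : A (p.2 : Fin (4 * g - 4) → ZMod 2) = q.1 - p.1 := by
        rw [hA]
        simp [LinearMap.smulRight_apply, hi, hj]
      have h1 : q.1 = p.1 + A (p.2 : Fin (4 * g - 4) → ZMod 2) := by
        rw [hAp]; abel
      rcases hcases with hcase | hcase
      · obtain ⟨π, hπ⟩ := exists_perm (p.2 : Fin (4 * g - 4) → ZMod 2)
          (q.2 : Fin (4 * g - 4) → ZMod 2) (by rw [← hwp, ← hwq, hcase])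
        refine ⟨π, 0, A, hA1, ?_, h1⟩
        rw [hπ]; funext i'; simp
      · have hwadd : wt (p.2 : Fin (4 * g - 4) → ZMod 2) =
            wt (fun i' => (q.2 : Fin (4 * g - 4) → ZMod 2) i' + 1) := by
          rw [wt_add_one, ← hwq, ← hwp]
          omega
        obtain ⟨π, hπ⟩ := exists_perm (p.2 : Fin (4 * g - 4) → ZMod 2)
          (fun i' => (q.2 : Fin (4 * g - 4) → ZMod 2) i' + 1) hwadd
        refine ⟨π, 1, A, hA1, ?_, h1⟩
        funext i'
        have := congrFun hπ i'
        simp only [Function.comp_apply] at this ⊢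
        rw [Pi.add_apply, Function.comp_apply, ← this]
        have h2 : (1 : ZMod 2) + 1 = 0 := rfl
        rw [add_assoc, h2, add_zero]

lemma f0_surj (g : ℕ) (hg : 3 ≤ g) : Function.Surjective (f0 g hg) := by
  classical
  rintro (s | k)
  · refine ⟨(s, ⟨fun _ => 0, by simp⟩), ?_⟩
    rw [f0, dif_pos ⟨0, rfl⟩]
  · set m := 2 * (k.1 + 1) with hm
    have hk := k.2
    have hmn : m ≤ 4 * g - 4 := by omega
    set x : Fin (4 * g - 4) → ZMod 2 := fun i => if (i : ℕ) < m then 1 else 0 with hx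
    have hwtx : wt x = m := by
      rw [wt]
      have hfc : (univ.filter fun i : Fin (4 * g - 4) => x i = 1) =
          (univ.filter fun i : Fin (4 * g - 4) => (i : ℕ) < m) := by
        apply Finset.filter_congr
        intro i _
        rw [hx]
        by_cases hi : (i : ℕ) < m
        · simp [hi]
        · simp [hi]
      rw [hfc, card_filter_lt _ _ hmn]
    have hsum : ∑ i, x i = 0 := by
      rw [sum_eq_wt, hwtx, hm]
      exact (ZMod.natCast_eq_zero_iff _ _).mpr ⟨k.1 + 1, rfl⟩
    have hnc : ¬ ∃ c : ZMod 2, x = fun _ => c := by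
      rintro ⟨c, hc⟩
      have h1 : x ⟨0, by omega⟩ = 1 := by rw [hx]; simp only; rw [if_pos]; omega
      have h0 : x ⟨4 * g - 5, by omega⟩ = 0 := by
        rw [hx]; simp only; rw [if_neg]; omega
      rw [congrFun hc ⟨0, by omega⟩] at h1
      rw [congrFun hc ⟨4 * g - 5, by omega⟩] at h0
      rw [h0] at h1
      exact absurd h1 (by decide)
    refine ⟨((0 : Fin (2 * g) → ZMod 2), ⟨x, hsum⟩), ?_⟩
    have hcoe : ((⟨x, hsum⟩ : {x : Fin (4 * g - 4) → ZMod 2 // ∑ i, x i = 0}) :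
        Fin (4 * g - 4) → ZMod 2) = x := rfl
    rw [f0]
    rw [dif_neg (by rw [hcoe]; exact hnc)]
    congr 1
    apply Fin.ext
    simp only [hcoe, hwtx]
    omega

end Stmt12Aux

/-- The group of block matrices [[I_{2g}, A],[0, π]] over ℤ/2 acts on
(ℤ/2)^{2g} ⊕ Q, where Q is the quotient of the even-weight subspace of (ℤ/2)^{4g−4}
by the all-ones vector, by (s,x) ↦ (s + Ax, πx); here A ranges over all linear maps
Q → (ℤ/2)^{2g} (linear maps on (ℤ/2)^{4g−4} annihilating the all-ones vector) and π
over the image of the S_{4g−4} coordinate-permutation action.  The number of orbits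
is 2^{2g} + g − 1.  Orbits are encoded as classes of the corresponding relation on
pairs (s, x) with x of even weight. -/
theorem stmt12 (g : ℕ) (hg : 3 ≤ g) :
    Nat.card (Quot (fun p q :
        (Fin (2 * g) → ZMod 2) × {x : Fin (4 * g - 4) → ZMod 2 // ∑ i, x i = 0} =>
      ∃ π : Equiv.Perm (Fin (4 * g - 4)), ∃ c : ZMod 2,
        ∃ A : (Fin (4 * g - 4) → ZMod 2) →ₗ[ZMod 2] (Fin (2 * g) → ZMod 2),
          A (fun _ => 1) = 0 ∧
          (q.2 : Fin (4 * g - 4) → ZMod 2) =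
            ((p.2 : Fin (4 * g - 4) → ZMod 2) ∘ π + fun _ => c) ∧
          q.1 = p.1 + A (p.2 : Fin (4 * g - 4) → ZMod 2))) =
      2 ^ (2 * g) + g - 1 := by
  classical
  have step := Nat.card_eq_of_bijective
    (Quot.lift (Stmt12Aux.f0 g hg) (Stmt12Aux.f0_resp g hg))
    ⟨by
      intro a b
      induction a using Quot.ind with | _ p =>
      induction b using Quot.ind with | _ q =>
      intro h
      exact Quot.sound (Stmt12Aux.f0_inj g hg p q h),
     by
      intro t
      obtain ⟨p, hp⟩ := Stmt12Aux.f0_surj g hg t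
      exact ⟨Quot.mk _ p, hp⟩⟩
  rw [step]
  rw [Nat.card_eq_fintype_card]
  rw [Fintype.card_sum]
  rw [Fintype.card_fun]
  rw [Fintype.card_fin, Fintype.card_fin, ZMod.card]
  clear step
  have harith : ∀ N : ℕ, N + (g - 1) = N + g - 1 := fun N => by omega
  exact harith _
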